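/- If (A_n) is a sequence of measurable sets and A a measurable set with (A_n) →_μ A, then lim_n ˜μ(A_n △ A) = 0, where △ denotes symmetric difference. (In other words, convergence in the limit relation →_μ implies convergence in the limit relation →_˜μ.) -/

import Mathlib

open MeasureTheory Filter Set
open scoped ENNReal symmDiff

/-- The limit relation `→_μ`: `(A n) →_μ L` iff `μ (A n \ L) → 0` and, for every
measurable `B` of finite measure, `μ ((L ∩ B) \ A n) → 0`. -/
def ConvMu {Ω : Type*} [MeasurableSpace Ω] (μ : Measure Ω)
    (A : ℕ → Set Ω) (L : Set Ω) : Prop :=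
  Tendsto (fun n => μ (A n \ L)) atTop (nhds 0) ∧
    ∀ B : Set Ω, MeasurableSet B → μ B < ⊤ →
      Tendsto (fun n => μ ((L ∩ B) \ A n)) atTop (nhds 0)

/-- The induced probability measure `˜μ(A) = Σ_{n=1}^∞ (μ(A ∩ Dₙ)/μ(Dₙ))·2⁻ⁿ`,
where `D k` stands here for the paper's `D_{k+1}` (so the index runs over `n ≥ 1`). -/
noncomputable def tmu {Ω : Type*} [MeasurableSpace Ω] (μ : Measure Ω)
    (D : ℕ → Set Ω) (A : Set Ω) : ℝ≥0∞ :=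
  ∑' n : ℕ, μ (A ∩ D n) / μ (D n) / 2 ^ (n + 1)


/-- Splitting an `ℝ≥0∞`-valued series into the first `N` terms plus the tail. -/
lemma tsum_split_ennreal (g : ℕ → ℝ≥0∞) (N : ℕ) :
    ∑' k, g k = ∑ k ∈ Finset.range N, g k + ∑' k, g (k + N) := by
  have hkey : ∀ i, (∑ k ∈ Finset.range N, g k) + ∑ a ∈ Finset.range i, g (a + N)
      = ∑ a ∈ Finset.range (N + i), g a := by
    intro i
    rw [Finset.sum_range_add]
    exact congrArg _ (Finset.sum_congr rfl fun a _ => by rw [add_comm])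
  rw [ENNReal.tsum_eq_iSup_nat, ENNReal.tsum_eq_iSup_nat, ENNReal.add_iSup]
  apply le_antisymm
  · refine iSup_le fun i => le_iSup_of_le i ?_
    rw [hkey i]
    exact Finset.sum_le_sum_of_subset (Finset.range_subset_range.2 (Nat.le_add_left i N))
  · refine iSup_le fun i => ?_
    rw [hkey i]
    exact le_iSup_of_le (N + i) le_rfl

set_option maxHeartbeats 1000000 in
/-- convergence under `→_μ` implies convergence under `→_˜μ`:
if `(A n) →_μ A` then `˜μ (A n ∆ A) → 0`. -/
theorem statement6 {Ω : Type*} [MeasurableSpace Ω] (μ : Measure Ω)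
    (D : ℕ → Set Ω) (hDmeas : ∀ n, MeasurableSet (D n))
    (hDdisj : ∀ k l, k ≠ l → Disjoint (D k) (D l))
    (hDunion : (⋃ n, D n) = Set.univ)
    (hDlb : ∀ n, (2 : ℝ≥0∞) ^ (n + 1) ≤ μ (D n))
    (hDfin : ∀ n, μ (D n) < ⊤)
    (Aseq : ℕ → Set Ω) (hAseq : ∀ n, MeasurableSet (Aseq n))
    (A : Set Ω) (hA : MeasurableSet A)
    (hconv : ConvMu μ Aseq A) :
    Tendsto (fun n => tmu μ D (symmDiff (Aseq n) A)) atTop (nhds 0) := by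
  obtain ⟨hc1, hc2⟩ := hconv
  let f : ℕ → ℕ → ℝ≥0∞ :=
    fun n k => μ ((Aseq n ∆ A) ∩ D k) / μ (D k) / 2 ^ (k + 1)
  -- uniform bound
  have hbound : ∀ n k, f n k ≤ 2⁻¹ ^ (k + 1) := by
    intro n k
    have hle : μ ((Aseq n ∆ A) ∩ D k) / μ (D k) ≤ 1 :=
      ENNReal.div_le_of_le_mul (by simpa using measure_mono inter_subset_right)
    calc f n k ≤ 1 / 2 ^ (k + 1) := ENNReal.div_le_div_right hle _
      _ = 2⁻¹ ^ (k + 1) := by rw [one_div, ← ENNReal.inv_pow]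
  -- pointwise convergence of each term
  have hterm : ∀ k, Tendsto (fun n => f n k) atTop (nhds 0) := by
    intro k
    have h0 : Tendsto (fun n => μ (Aseq n \ A) + μ ((A ∩ D k) \ Aseq n))
        atTop (nhds 0) := by
      simpa using hc1.add (hc2 (D k) (hDmeas k) (hDfin k))
    refine tendsto_of_tendsto_of_tendsto_of_le_of_le tendsto_const_nhds h0
      (fun n => zero_le) (fun n => ?_)
    have hsub : (Aseq n ∆ A) ∩ D k ⊆ (Aseq n \ A) ∪ ((A ∩ D k) \ Aseq n) := by
      intro x hx
      rcases hx.1 with h | h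
      · exact Or.inl h
      · exact Or.inr ⟨⟨h.1, hx.2⟩, h.2⟩
    have h1le : (1 : ℝ≥0∞) ≤ μ (D k) :=
      le_trans (one_le_pow_of_one_le' one_le_two _) (hDlb k)
    have h2le : (1 : ℝ≥0∞) ≤ 2 ^ (k + 1) := one_le_pow_of_one_le' one_le_two _
    calc f n k ≤ μ ((Aseq n ∆ A) ∩ D k) / 1 / 1 :=
          ENNReal.div_le_div (ENNReal.div_le_div_left h1le _)
            (by simpa using h2le)
      _ = μ ((Aseq n ∆ A) ∩ D k) := by simp
      _ ≤ μ (Aseq n \ A) + μ ((A ∩ D k) \ Aseq n) :=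
          le_trans (measure_mono hsub) (measure_union_le _ _)
  -- main ε-argument
  rw [ENNReal.tendsto_atTop_zero]
  intro ε hε
  have hε2 : (0 : ℝ≥0∞) < ε / 2 := ENNReal.half_pos hε.ne'
  -- choose N with tail sum small
  have hsumfin : (∑' k : ℕ, (2⁻¹ : ℝ≥0∞) ^ (k + 1)) ≠ ⊤ := by
    rw [ENNReal.tsum_geometric_add_one]
    exact ENNReal.mul_ne_top (by simp) (ENNReal.inv_ne_top.2 (by norm_num))
  have htail := ENNReal.tendsto_sum_nat_add (fun k => (2⁻¹ : ℝ≥0∞) ^ (k + 1)) hsumfin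
  obtain ⟨N, hN⟩ := (htail.eventually (gt_mem_nhds hε2)).exists
  -- the finite part tends to 0
  have hfin : Tendsto (fun n => ∑ k ∈ Finset.range N, f n k) atTop (nhds 0) := by
    have := tendsto_finset_sum (Finset.range N) (fun k _ => hterm k)
    simpa using this
  obtain ⟨M, hM⟩ := (ENNReal.tendsto_atTop_zero.1 hfin) (ε / 2) hε2
  refine ⟨M, fun n hn => ?_⟩
  have hsplit : tmu μ D (Aseq n ∆ A)
      = ∑ k ∈ Finset.range N, f n k + ∑' k : ℕ, f n (k + N) := by
    have h0 : tmu μ D (Aseq n ∆ A) = ∑' k : ℕ, f n k := rfl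
    rw [h0]
    exact tsum_split_ennreal (fun k => f n k) N
  rw [hsplit]
  have htail' : (∑' k : ℕ, f n (k + N)) ≤ ∑' k : ℕ, (2⁻¹ : ℝ≥0∞) ^ (k + N + 1) :=
    ENNReal.tsum_le_tsum fun k => hbound n (k + N)
  calc ∑ k ∈ Finset.range N, f n k + ∑' k : ℕ, f n (k + N)
      ≤ ε / 2 + ε / 2 := add_le_add (hM n hn) (htail'.trans hN.le)
    _ = ε := ENNReal.add_halves ε
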